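/- For every odd prime p and every integer j ≥ 0, the following congruence between integers holds: C(2jp, jp) · ( Σ_{k=0}^{2jp} (−1)^k · C(2jp, k)^4 ) ≡ C(2j, j) · ( Σ_{k=0}^{2j} (−1)^k · C(2j, k)^4 ) (mod p). -/

import Mathlib

open Finset

lemma lucas_mul (p : ℕ) (hp : p.Prime) (n k : ℕ) :
    ((Nat.choose (n * p) k : ℕ) : ZMod p) =
      if p ∣ k then ((Nat.choose n (k / p) : ℕ) : ZMod p) else 0 := by
  haveI : Fact p.Prime := ⟨hp⟩
  have h := (ZMod.intCast_eq_intCast_iff _ _ _).mpr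
    (Choose.choose_modEq_choose_mod_mul_choose_div (n := n * p) (k := k) (p := p))
  push_cast at h
  rw [h]
  have hp0 : 0 < p := hp.pos
  rw [Nat.mul_mod_left, Nat.mul_div_cancel _ hp0]
  by_cases hd : p ∣ k
  · rw [if_pos hd, Nat.mod_eq_zero_of_dvd hd]
    simp
  · rw [if_neg hd]
    have : k % p ≠ 0 := fun h => hd (Nat.dvd_of_mod_eq_zero h)
    simp [Nat.choose_eq_zero_of_lt (Nat.pos_of_ne_zero this)]

/-- For every odd prime `p` and every integer `j ≥ 0`,
`C(2jp, jp) * (∑_{k=0}^{2jp} (−1)^k C(2jp, k)^4) ≡ C(2j, j) * (∑_{k=0}^{2j} (−1)^k C(2j, k)^4)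
(mod p)`. -/
theorem stmt6 (p : ℕ) (hp : p.Prime) (hodd : Odd p) (j : ℕ) :
    (Nat.choose (2 * j * p) (j * p) : ℤ) *
        (∑ k ∈ Finset.range (2 * j * p + 1), (-1 : ℤ) ^ k * (Nat.choose (2 * j * p) k : ℤ) ^ 4) ≡
      (Nat.choose (2 * j) j : ℤ) *
        (∑ k ∈ Finset.range (2 * j + 1), (-1 : ℤ) ^ k * (Nat.choose (2 * j) k : ℤ) ^ 4)
      [ZMOD (p : ℤ)] := by
  haveI : Fact p.Prime := ⟨hp⟩
  have hp0 : 0 < p := hp.pos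
  rw [← ZMod.intCast_eq_intCast_iff]
  push_cast
  set F : ℕ → ZMod p := fun k => (-1) ^ k * (Nat.choose (2 * j * p) k : ZMod p) ^ 4 with hF
  have hc : ((Nat.choose (2 * j * p) (j * p) : ℕ) : ZMod p) = (Nat.choose (2 * j) j : ZMod p) := by
    rw [lucas_mul p hp, if_pos (dvd_mul_left p j), Nat.mul_div_cancel _ hp0]
  have hsub : (Finset.range (2 * j + 1)).image (· * p) ⊆ Finset.range (2 * j * p + 1) := by
    intro k hk
    simp only [Finset.mem_image, Finset.mem_range] at hk ⊢
    obtain ⟨q, hq, rfl⟩ := hk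
    have : q * p ≤ 2 * j * p := Nat.mul_le_mul_right p (Nat.lt_succ_iff.mp hq)
    omega
  have hzero : ∀ k ∈ Finset.range (2 * j * p + 1),
      k ∉ (Finset.range (2 * j + 1)).image (· * p) → F k = 0 := by
    intro k hk hkn
    have hnd : ¬ p ∣ k := by
      intro h
      obtain ⟨q, rfl⟩ := h
      apply hkn
      simp only [Finset.mem_image, Finset.mem_range]
      refine ⟨q, ?_, mul_comm q p ▸ rfl⟩
      simp only [Finset.mem_range] at hk
      by_contra hq
      push_neg at hq
      have : (2 * j + 1) * p ≤ p * q := Nat.mul_le_mul_left p hq |>.trans_eq' (by ring)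
      nlinarith
    simp [hF, lucas_mul p hp, hnd]
  have hsum : ∑ k ∈ Finset.range (2 * j * p + 1), F k
      = ∑ q ∈ Finset.range (2 * j + 1), (-1 : ZMod p) ^ q * (Nat.choose (2 * j) q : ZMod p) ^ 4 := by
    rw [← Finset.sum_subset hsub hzero, Finset.sum_image
      (fun a _ b _ h => Nat.eq_of_mul_eq_mul_right hp0 h)]
    refine Finset.sum_congr rfl fun q _ => ?_
    have h1 : ((-1 : ZMod p)) ^ (q * p) = (-1) ^ q := by
      rw [mul_comm, pow_mul, hodd.neg_one_pow]
    have h2 : ((Nat.choose (2 * j * p) (q * p) : ℕ) : ZMod p) = (Nat.choose (2 * j) q : ZMod p) := by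
      rw [lucas_mul p hp, if_pos (dvd_mul_left p q), Nat.mul_div_cancel _ hp0]
    simp [hF, h1, h2]
  rw [hc, hsum]
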